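/- The Ricci tensor of the Levi-Civita connection for the canonical metric on the differential calculus of O₃, defined by Ric = (id ⊗ ev∘ρ)(Θ) where Θ = (σ₂₃ ⊗ id)ζ⁻¹R(∇), equals −¼ Σⱼ eⱼ ⊗ eⱼ; equivalently Ric(eᵢ, eⱼ) = −¼ δ_{ij}. -/
import Mathlib


open Matrix

/-- The Ricci tensor `Ric = (id ⊗ ev∘ρ)(Θ)`, `Θ = (σ₂₃ ⊗ id)ζ⁻¹R(∇)`, of the
Levi-Civita connection for the canonical metric on the calculus of `O₃` equals
`−¼ Σⱼ eⱼ ⊗ eⱼ`, i.e. `Ric(eᵢ, eⱼ) = −¼ δᵢⱼ`. Here (0-based indices)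
`R(∇)(eₛ) = ⅛ Σ_{k≠s}(e_k⊗e_k⊗eₛ − e_k⊗eₛ⊗e_k)` is recorded by the `4`-index
array `RT p q r s` of coefficients of `e_p⊗e_q⊗e_r` in `R(∇)(eₛ)` (i.e.
`ζ⁻¹R(∇) = Σ RT p q r s · e_p⊗e_q⊗e_r⊗eₛ*`), `σ₂₃ ⊗ id` flips the second and
third indices, and contracting with `ev∘ρ` (where `ρ(eᵣ ⊗ eₛ*) = eₛ* ⊗ eᵣ`,
`ev(eₛ* ⊗ eᵣ) = δₛᵣ`) sums over the last two indices set equal. -/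
theorem ricci_tensor_eq
    {A : Type*} [Ring A] [Algebra ℚ A]
    (RT : Fin 3 → Fin 3 → Fin 3 → Fin 3 → A)
    (hRT : ∀ p q r s, RT p q r s =
      algebraMap ℚ A (1/8) *
        ((if p = q ∧ p ≠ s ∧ r = s then 1 else 0)
          - (if p ≠ s ∧ q = s ∧ r = p then 1 else 0)))
    (Θ : Fin 3 → Fin 3 → Fin 3 → Fin 3 → A)
    (hΘ : ∀ p q r s, Θ p q r s = RT p r q s)
    (Ric : Fin 3 → Fin 3 → A)
    (hRic : ∀ p q, Ric p q = ∑ r, Θ p q r r) :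
    ∀ p q, Ric p q = if p = q then algebraMap ℚ A (-(1/4)) else 0 := by
  intro p q
  rw [hRic]
  simp only [hΘ, hRT]
  fin_cases p <;> fin_cases q <;>
    simp [Fin.sum_univ_three, ← _root_.map_mul, ← map_sub, ← map_add, ← map_neg] <;>
    norm_num
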